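/- Let p > 1 and let a₁, a₂ ≥ 0 and b₁, b₂ > 0. If equality holds in the Picone inequality, i.e. |a₁ - a₂|^p = |b₁ - b₂|^{p-2}(b₁ - b₂)(a₁^p / b₁^{p-1} - a₂^p / b₂^{p-1}), then there exists a constant k ≥ 0 such that a₁ = k·b₁ and a₂ = k·b₂. -/

import Mathlib

open Real

/-- Tangent line inequality for `|x| ^ p` at a nonnegative point `y`. -/
lemma picone_tangent_le {p : ℝ} (hp : 1 < p) {y : ℝ} (hy : 0 ≤ y) (x : ℝ) :
    y ^ p + p * y ^ (p - 1) * (x - y) ≤ |x| ^ p := by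
  have hp0 : (0:ℝ) < p := lt_trans one_pos hp
  rcases eq_or_lt_of_le hy with rfl | hy
  · rw [Real.zero_rpow hp0.ne', Real.zero_rpow (by linarith : p - 1 ≠ 0)]
    simpa using Real.rpow_nonneg (abs_nonneg x) p
  · rcases le_or_gt 0 x with hx | hx
    · -- x ≥ 0 : Bernoulli with s = x/y - 1
      have hs : -1 ≤ x / y - 1 := by
        have : 0 ≤ x / y := div_nonneg hx hy.le
        linarith
      have hb := one_add_mul_self_le_rpow_one_add hs hp.le
      have h1 : 1 + (x / y - 1) = x / y := by ring
      rw [h1] at hb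
      have hyp : (0:ℝ) < y ^ p := Real.rpow_pos_of_pos hy p
      have hb2 : y ^ p * (1 + p * (x / y - 1)) ≤ y ^ p * (x / y) ^ p :=
        mul_le_mul_of_nonneg_left hb hyp.le
      have hdiv : y ^ p * (x / y) ^ p = |x| ^ p := by
        rw [Real.div_rpow hx hy.le, mul_div_cancel₀ _ (Real.rpow_pos_of_pos hy p).ne',
          abs_of_nonneg hx]
      rw [hdiv] at hb2
      refine le_trans (le_of_eq ?_) hb2
      have hyy : y ^ p = y ^ (p - 1) * y := by
        rw [← Real.rpow_add_one hy.ne' (p - 1)]; ring_nf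
      rw [hyy]
      field_simp
    · -- x < 0 : LHS is negative
      have hyp : (0:ℝ) < y ^ p := Real.rpow_pos_of_pos hy p
      have hyp1 : (0:ℝ) < y ^ (p - 1) := Real.rpow_pos_of_pos hy (p - 1)
      have hyy : y ^ p = y ^ (p - 1) * y := by
        rw [← Real.rpow_add_one hy.ne' (p - 1)]; ring_nf
      have habs : (0:ℝ) ≤ |x| ^ p := Real.rpow_nonneg (abs_nonneg x) p
      nlinarith [habs, mul_pos (mul_pos hyp1 hy) (sub_pos.mpr hp),
        mul_neg_of_pos_of_neg (mul_pos hp0 hyp1) hx]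

/-- Equality in the tangent line inequality forces `x = y`. -/
lemma picone_tangent_eq {p : ℝ} (hp : 1 < p) {y x : ℝ} (hy : 0 ≤ y) (hx : 0 ≤ x)
    (h : y ^ p + p * y ^ (p - 1) * (x - y) = x ^ p) : x = y := by
  have hp0 : (0:ℝ) < p := lt_trans one_pos hp
  rcases eq_or_lt_of_le hy with rfl | hy
  · rw [Real.zero_rpow hp0.ne', Real.zero_rpow (by linarith : p - 1 ≠ 0)] at h
    simp only [zero_add, mul_zero, zero_mul] at h
    have : x ^ p = 0 := h.symm
    have := (Real.rpow_eq_zero hx hp0.ne').mp this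
    simp [this]
  · by_contra hne
    have hs : -1 ≤ x / y - 1 := by
      have : 0 ≤ x / y := div_nonneg hx hy.le
      linarith
    have hs' : x / y - 1 ≠ 0 := by
      intro h0
      apply hne
      have : x / y = 1 := by linarith
      field_simp at this
      linarith
    have hb := one_add_mul_self_lt_rpow_one_add hs hs' hp
    have h1 : 1 + (x / y - 1) = x / y := by ring
    rw [h1] at hb
    have hyp : (0:ℝ) < y ^ p := Real.rpow_pos_of_pos hy p
    have hb2 : y ^ p * (1 + p * (x / y - 1)) < y ^ p * (x / y) ^ p :=
      mul_lt_mul_of_pos_left hb hyp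
    have hdiv : y ^ p * (x / y) ^ p = x ^ p := by
      rw [Real.div_rpow hx hy.le, mul_div_cancel₀ _ (Real.rpow_pos_of_pos hy p).ne']
    rw [hdiv] at hb2
    have hyy : y ^ p = y ^ (p - 1) * y := by
      rw [← Real.rpow_add_one hy.ne' (p - 1)]; ring_nf
    have : y ^ p * (1 + p * (x / y - 1)) = y ^ p + p * y ^ (p - 1) * (x - y) := by
      rw [hyy]
      field_simp
    rw [this, h] at hb2
    exact lt_irrefl _ hb2

/-- Equality case in the discrete Picone inequality. -/
theorem picone_equality (p a₁ a₂ b₁ b₂ : ℝ) (hp : 1 < p)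
    (ha₁ : 0 ≤ a₁) (ha₂ : 0 ≤ a₂) (hb₁ : 0 < b₁) (hb₂ : 0 < b₂)
    (heq : |a₁ - a₂| ^ p =
      |b₁ - b₂| ^ (p - 2) * (b₁ - b₂) *
        (a₁ ^ p / b₁ ^ (p - 1) - a₂ ^ p / b₂ ^ (p - 1))) :
    ∃ k : ℝ, 0 ≤ k ∧ a₁ = k * b₁ ∧ a₂ = k * b₂ := by
  have hp0 : (0:ℝ) < p := lt_trans one_pos hp
  -- reduce to the case b₂ ≤ b₁ by symmetry
  wlog hb : b₂ ≤ b₁ generalizing a₁ a₂ b₁ b₂ with H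
  · have heq' : |a₂ - a₁| ^ p =
        |b₂ - b₁| ^ (p - 2) * (b₂ - b₁) *
          (a₂ ^ p / b₂ ^ (p - 1) - a₁ ^ p / b₁ ^ (p - 1)) := by
      rw [abs_sub_comm a₂ a₁, abs_sub_comm b₂ b₁, heq]; ring
    obtain ⟨k, hk, hk2, hk1⟩ := H a₂ a₁ b₂ b₁ ha₂ ha₁ hb₂ hb₁ heq' (le_of_not_ge hb)
    exact ⟨k, hk, hk1, hk2⟩
  rcases eq_or_lt_of_le hb with hbb | hbb
  · -- b₁ = b₂
    subst hbb
    rw [sub_self, mul_zero, zero_mul] at heq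
    have : a₁ - a₂ = 0 := by
      have := (Real.rpow_eq_zero (abs_nonneg _) hp0.ne').mp heq
      exact abs_eq_zero.mp this
    refine ⟨a₁ / b₂, div_nonneg ha₁ hb₂.le, ?_, ?_⟩
    · rw [div_mul_cancel₀ _ hb₂.ne']
    · rw [div_mul_cancel₀ _ hb₂.ne']; linarith
  · -- b₂ < b₁
    set δ : ℝ := b₁ - b₂ with hδ
    have hδ0 : 0 < δ := by simp [hδ]; linarith
    set t₁ : ℝ := a₁ / b₁ with ht₁
    set t₂ : ℝ := a₂ / b₂ with ht₂
    have ht₁0 : 0 ≤ t₁ := div_nonneg ha₁ hb₁.le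
    have ht₂0 : 0 ≤ t₂ := div_nonneg ha₂ hb₂.le
    have ha₁' : a₁ = t₁ * b₁ := by rw [ht₁, div_mul_cancel₀ _ hb₁.ne']
    have ha₂' : a₂ = t₂ * b₂ := by rw [ht₂, div_mul_cancel₀ _ hb₂.ne']
    -- rewrite heq
    have hD : |b₁ - b₂| ^ (p - 2) * (b₁ - b₂) = δ ^ (p - 1) := by
      rw [abs_of_pos hδ0, ← hδ, ← Real.rpow_add_one hδ0.ne' (p - 2)]
      ring_nf
    have hA1 : a₁ ^ p / b₁ ^ (p - 1) = t₁ ^ p * b₁ := by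
      rw [ha₁', Real.mul_rpow ht₁0 hb₁.le]
      rw [show b₁ ^ p = b₁ ^ (p - 1) * b₁ by
        rw [← Real.rpow_add_one hb₁.ne' (p - 1)]; ring_nf]
      field_simp [(Real.rpow_pos_of_pos hb₁ (p - 1)).ne']
    have hA2 : a₂ ^ p / b₂ ^ (p - 1) = t₂ ^ p * b₂ := by
      rw [ha₂', Real.mul_rpow ht₂0 hb₂.le]
      rw [show b₂ ^ p = b₂ ^ (p - 1) * b₂ by
        rw [← Real.rpow_add_one hb₂.ne' (p - 1)]; ring_nf]
      field_simp [(Real.rpow_pos_of_pos hb₂ (p - 1)).ne']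
    rw [hD, hA1, hA2] at heq
    -- tangent inequality at y = t₁ * δ
    have hy0 : 0 ≤ t₁ * δ := mul_nonneg ht₁0 hδ0.le
    have h1 := picone_tangent_le hp hy0 (a₁ - a₂)
    have hyp : (t₁ * δ) ^ p = t₁ ^ p * δ ^ p := Real.mul_rpow ht₁0 hδ0.le
    have hyp1 : (t₁ * δ) ^ (p - 1) = t₁ ^ (p - 1) * δ ^ (p - 1) :=
      Real.mul_rpow ht₁0 hδ0.le
    have hdp : δ ^ p = δ ^ (p - 1) * δ := by
      rw [← Real.rpow_add_one hδ0.ne' (p - 1)]; ring_nf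
    have hX : a₁ - a₂ - t₁ * δ = (t₁ - t₂) * b₂ := by
      rw [ha₁', ha₂', hδ]; ring
    rw [hyp, hyp1, hX, hdp, heq] at h1
    -- deduce the reverse tangent inequality for t₂ vs t₁
    have h2 := picone_tangent_le hp ht₁0 t₂
    rw [abs_of_nonneg ht₂0] at h2
    have hDpos : (0:ℝ) < δ ^ (p - 1) := Real.rpow_pos_of_pos hδ0 (p - 1)
    have hb1 : b₁ = δ + b₂ := by rw [hδ]; ring
    rw [hb1] at h1
    have hkey : t₁ ^ p + p * t₁ ^ (p - 1) * (t₂ - t₁) = t₂ ^ p :=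
      le_antisymm h2 (by nlinarith [h1, mul_pos hDpos hb₂])
    have ht : t₂ = t₁ := picone_tangent_eq hp ht₁0 ht₂0 hkey
    exact ⟨t₁, ht₁0, ha₁', by rw [ha₂', ht]⟩
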